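/- Let k ⊆ L be fields with k algebraically closed of characteristic 0. Let d ≥ 2 and let f(X) = X^d + a_{d−2}X^{d−2} + ⋯ + a_1 X + a_0 ∈ L[X] be a monic polynomial of degree d in normal form. Suppose b₁, b₀ ∈ L with b₁ ≠ 0 are such that the conjugated polynomial g(X) = b₁^{−1}·(f(b₁X + b₀) − b₀) has all of its coefficients in k. Then b₁ ∈ k, b₀ ∈ k, and all coefficients of f lie in k. (The core of Lemma 5.2 of the paper: a polynomial in normal form is isotrivial if and only if it has constant coefficients; the paper's proof reduces isotriviality to conjugation by an affine map σ(z) = b₁z + b₀.) -/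

import Mathlib

open Polynomial in
private lemma aux_pow_mem {L : Type*} [Field L] (k : Subfield L) [IsAlgClosed ↥k]
    {x : L} {n : ℕ} (hn : n ≠ 0) (hx : x ^ n ∈ k) : x ∈ k := by
  set c : k := ⟨x ^ n, hx⟩
  set P : Polynomial k := X ^ n - C c with hP
  have hP0 : P ≠ 0 := (monic_X_pow_sub_C c hn).ne_zero
  have hroot : (P.map k.subtype).IsRoot x := by
    simp [hP, IsRoot, eval_map, c]
  have hsplits : P.Splits := IsAlgClosed.splits P
  have hx' : x ∈ (P.map k.subtype).roots := by
    rw [mem_roots]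
    · exact hroot
    · simpa using hP0
  rw [hsplits.roots_map k.subtype] at hx'
  obtain ⟨r, _, hr⟩ := Multiset.mem_map.mp hx'
  rw [← hr]; exact r.2

theorem stmt_4 {L : Type*} [Field L] [CharZero L] (k : Subfield L)
    [IsAlgClosed ↥k] (d : ℕ) (hd : 2 ≤ d) (f : Polynomial L)
    (hmonic : f.Monic) (hdeg : f.natDegree = d) (hnormal : f.coeff (d - 1) = 0)
    (b₁ b₀ : L) (hb₁ : b₁ ≠ 0)
    (hg : ∀ n : ℕ,
      (Polynomial.C b₁⁻¹ * (f.comp (Polynomial.C b₁ * Polynomial.X + Polynomial.C b₀)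
        - Polynomial.C b₀)).coeff n ∈ k) :
    b₁ ∈ k ∧ b₀ ∈ k ∧ ∀ n : ℕ, f.coeff n ∈ k := by
  open Polynomial in
  set τ : Polynomial L := C b₁ * X + C b₀ with hτ
  set g : Polynomial L := C b₁⁻¹ * (f.comp τ - C b₀) with hgdef
  have hτdeg : τ.natDegree = 1 := natDegree_linear hb₁
  have hτlc : τ.leadingCoeff = b₁ := leadingCoeff_linear hb₁
  have hcompdeg : (f.comp τ).natDegree = d := by
    rw [natDegree_comp, hτdeg, hdeg, mul_one]
  have hcomplc : (f.comp τ).coeff d = b₁ ^ d := by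
    have h := leadingCoeff_comp (q := τ) (p := f) (by rw [hτdeg]; norm_num)
    rw [hτlc, hmonic.leadingCoeff, one_mul, hdeg] at h
    rw [← h, leadingCoeff, hcompdeg]
  -- coefficient d of g
  have hgd : g.coeff d = b₁ ^ (d - 1) := by
    rw [hgdef, coeff_C_mul, coeff_sub, coeff_C, if_neg (by omega), hcomplc, sub_zero]
    have h : b₁ ^ d = b₁ * b₁ ^ (d - 1) := by
      rw [← pow_succ']; congr 1; omega
    rw [h, ← mul_assoc, inv_mul_cancel₀ hb₁, one_mul]
  -- b₁ ∈ k
  have hb₁k : b₁ ∈ k := by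
    apply aux_pow_mem k (n := d - 1) (by omega)
    rw [← hgd]; exact hg d
  -- erase lead facts
  have herase : f = X ^ d + f.eraseLead := by
    have h := f.eraseLead_add_C_mul_X_pow
    rw [hmonic.leadingCoeff, hdeg, C_1, one_mul] at h
    rw [add_comm]; exact h.symm
  have heldeg : f.eraseLead.natDegree ≤ d - 2 := by
    have h1 : f.eraseLead.natDegree ≤ d - 1 := by
      have := f.eraseLead_natDegree_le
      omega
    rcases Nat.lt_or_ge f.eraseLead.natDegree (d-1) with h | h
    · omega
    · have heq : f.eraseLead.natDegree = d - 1 := le_antisymm h1 h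
      exfalso
      have hne : f.eraseLead ≠ 0 := by
        intro h0
        rw [h0] at heq
        simp only [natDegree_zero] at heq; omega
      have hc : f.eraseLead.coeff (d-1) ≠ 0 := by
        rw [← heq]; exact hne ∘ leadingCoeff_eq_zero.mp
      apply hc
      rw [f.eraseLead_coeff_of_ne (d-1) (by rw [hdeg]; omega)]
      exact hnormal
  -- coefficient d-1 of f.comp τ
  have hcompd1 : (f.comp τ).coeff (d-1) = d * b₁ ^ (d-1) * b₀ := by
    have hτ' : τ = C b₁ * (X + C (b₀ * b₁⁻¹)) := by
      rw [hτ, mul_add, ← C_mul]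
      congr 2
      field_simp
    have h1 : (τ ^ d).coeff (d - 1) = d * b₁ ^ (d-1) * b₀ := by
      rw [hτ', mul_pow, ← C_pow, coeff_C_mul, coeff_X_add_C_pow]
      have h3 : d - (d-1) = 1 := by omega
      have h4 : d.choose (d-1) = d := by
        rw [Nat.choose_symm (by omega : 1 ≤ d), Nat.choose_one_right]
      have h5 : b₁ ^ d = b₁ ^ (d-1) * b₁ := by
        rw [← pow_succ]; congr 1; omega
      rw [h3, h4, h5, pow_one]
      field_simp
    have h2 : (f.eraseLead.comp τ).coeff (d - 1) = 0 := by
      apply coeff_eq_zero_of_natDegree_lt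
      have : (f.eraseLead.comp τ).natDegree ≤ f.eraseLead.natDegree * 1 := by
        rw [natDegree_comp, natDegree_linear hb₁]
      omega
    conv_lhs => rw [herase]
    rw [add_comp, coeff_add, h2, add_zero, pow_comp, X_comp]
    exact h1
  -- coefficient d-1 of g, b₀ ∈ k
  have hgd1 : g.coeff (d-1) = d * b₁ ^ (d-2) * b₀ := by
    rw [hgdef, coeff_C_mul, coeff_sub, coeff_C, if_neg (by omega), hcompd1, sub_zero]
    have h5 : b₁ ^ (d-1) = b₁ * b₁ ^ (d-2) := by
      rw [← pow_succ']; congr 1; omega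
    rw [h5]
    field_simp
  have hb₀k : b₀ ∈ k := by
    have hmem : (d : L) * b₁ ^ (d-2) * b₀ ∈ k := by rw [← hgd1]; exact hg (d-1)
    have hd0 : ((d : L) * b₁ ^ (d-2)) ≠ 0 := by
      apply mul_ne_zero
      · exact_mod_cast Nat.cast_ne_zero.mpr (by omega)
      · exact pow_ne_zero _ hb₁
    have : b₀ = ((d : L) * b₁ ^ (d-2))⁻¹ * ((d : L) * b₁ ^ (d-2) * b₀) := by
      rw [← mul_assoc, inv_mul_cancel₀ hd0, one_mul]
    rw [this]
    exact k.mul_mem (k.inv_mem (k.mul_mem (natCast_mem k d) (k.pow_mem hb₁k _))) hmem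
  refine ⟨hb₁k, hb₀k, ?_⟩
  -- f has coefficients in k
  obtain ⟨G, hG⟩ : ∃ G : Polynomial k, G.map k.subtype = g :=
    (mem_lifts g).mp ((lifts_iff_coeff_lifts g).mpr (fun n => ⟨⟨_, hg n⟩, rfl⟩))
  set β₁ : k := ⟨b₁, hb₁k⟩ with hβ₁
  set β₀ : k := ⟨b₀, hb₀k⟩ with hβ₀
  set F : Polynomial k := (C β₁ * G + C β₀).comp (C β₁⁻¹ * X + C (-(β₁⁻¹ * β₀))) with hF
  have hFmap : F.map k.subtype = f := by
    have hsub : ∀ x : k, k.subtype x = (x : L) := fun _ => rfl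
    rw [hF, map_comp, Polynomial.map_add, Polynomial.map_add, Polynomial.map_mul,
      Polynomial.map_mul, map_C, map_C, map_C, map_C, Polynomial.map_X, hG]
    have e1 : k.subtype β₁ = b₁ := rfl
    have e2 : k.subtype β₀ = b₀ := rfl
    have e3 : k.subtype (β₁⁻¹) = b₁⁻¹ := k.coe_inv β₁
    have e4 : k.subtype (-(β₁⁻¹ * β₀)) = -(b₁⁻¹ * b₀) := by
      show ((-(β₁⁻¹ * β₀) : k) : L) = _
      push_cast [Subfield.coe_inv]
      rfl
    rw [e1, e2, e3, e4]
    -- now: (C b₁ * g + C b₀).comp (C b₁⁻¹ * X + C (-(b₁⁻¹ * b₀))) = f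
    have key : C b₁ * g + C b₀ = f.comp τ := by
      rw [hgdef, ← mul_assoc, ← C_mul, mul_inv_cancel₀ hb₁, C_1, one_mul, sub_add_cancel]
    rw [key]
    have hτσ : τ.comp (C b₁⁻¹ * X + C (-(b₁⁻¹ * b₀))) = X := by
      rw [hτ, add_comp, mul_comp, C_comp, C_comp, X_comp, mul_add, ← C_mul, ← mul_assoc,
        ← C_mul, mul_inv_cancel₀ hb₁, C_1, one_mul]
      rw [mul_neg, ← mul_assoc, mul_inv_cancel₀ hb₁, one_mul,
        add_assoc, ← C_add, neg_add_cancel, C_0, add_zero]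
    rw [comp_assoc, hτσ, comp_X]
  intro n
  rw [← hFmap, coeff_map]
  exact (F.coeff n).2
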